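/- For every integer n ≥ 2 and every subset T of {1,…,n−1} containing no two consecutive integers, Σ_{w ∈ W̃_n, Dot(w) ⊇ T} t^{cro(w)} = t^{|T|} (1+t)^{n−2|T|} in ℤ[t]. -/

import Mathlib

open Polynomial Finset

/-- `[m]_t = 1 + t + ⋯ + t^(m-1)`, with `[0]_t = 0`. -/
noncomputable def qnum (m : ℕ) : Polynomial ℤ := ∑ i ∈ Finset.range m, X ^ i

/-- Given the previous value `prev` and a (sorted) list `s₁, …, s_ℓ`, the product
`[s₁ - prev - 1]_t · [s₂ - s₁ - 1]_t ⋯ [s_ℓ - s_{ℓ-1} - 1]_t`. -/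
noncomputable def gapProd : ℕ → List ℕ → Polynomial ℤ
  | _, [] => 1
  | prev, s :: rest => qnum (s - prev - 1) * gapProd s rest

/-- For a sorted list `s₁, …, s_ℓ`, the product
`[s₁]_t · [s₂ - s₁ - 1]_t ⋯ [s_ℓ - s_{ℓ-1} - 1]_t`. -/
noncomputable def psiProd : List ℕ → Polynomial ℤ
  | [] => 1
  | s :: rest => qnum s * gapProd s rest

/-- `S` contains no two consecutive integers. -/
def NoTwoConsec (S : Finset ℕ) : Prop := ∀ i ∈ S, i + 1 ∉ S

instance (S : Finset ℕ) : Decidable (NoTwoConsec S) :=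
  inferInstanceAs (Decidable (∀ i ∈ S, i + 1 ∉ S))

/-- The polynomial `ψ_{S,n}(t) ∈ ℤ[t]`. -/
noncomputable def psi (n : ℕ) (S : Finset ℕ) : Polynomial ℤ :=
  if S ⊆ Finset.Icc 1 (n - 1) ∧ NoTwoConsec S then
    if S = ∅ then qnum (n + 1)
    else X ^ S.card * psiProd (S.sort (· ≤ ·)) *
      (if n - 1 ∈ S then 1 else qnum (n - S.sup id))
  else 0

/-- The three symbols `•` (dot), `×` (cross), `␣` (blank). -/
inductive Mark : Type where
  | dot : Mark
  | cross : Mark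
  | blank : Mark
  deriving DecidableEq

instance instFintypeMark : Fintype Mark :=
  ⟨{Mark.dot, Mark.cross, Mark.blank}, by intro x; cases x <;> simp⟩

/-- The letter `w_i` (positions numbered `0, …, m-1`) of a sequence encoded as a
function `Fin m → Mark`; out-of-range positions read as blank. -/
def letterAt {m : ℕ} (w : Fin m → Mark) (i : ℕ) : Mark :=
  if h : i < m then w ⟨i, h⟩ else Mark.blank

/-- Membership in `W̃_n`: `w = w₀ w₁ … w_{n-1}` satisfies
(i) if `w_i = •` then `i ≥ 1` and `w_{i-1} = ×`;
(ii) a cross in position `j ≤ n-2` is immediately followed by a cross or a dot. -/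
def IsWt (n : ℕ) (w : Fin n → Mark) : Prop :=
  (∀ i, letterAt w i = Mark.dot → 1 ≤ i ∧ letterAt w (i - 1) = Mark.cross) ∧
  (∀ j, j ≤ n - 2 → letterAt w j = Mark.cross →
    letterAt w (j + 1) = Mark.cross ∨ letterAt w (j + 1) = Mark.dot)

/-- `Dot(w)`, the set of positions carrying a dot. -/
def DotSet (n : ℕ) (w : Fin n → Mark) : Finset ℕ :=
  (Finset.range n).filter fun i => letterAt w i = Mark.dot

/-- `cro(w)`, the number of crosses. -/
def cro (n : ℕ) (w : Fin n → Mark) : ℕ :=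
  ((Finset.range n).filter fun i => letterAt w i = Mark.cross).card

namespace WtAux

lemma letterAt_lt {m : ℕ} (w : Fin m → Mark) {i : ℕ} (h : i < m) :
    letterAt w i = w ⟨i, h⟩ := dif_pos h

lemma letterAt_ge {m : ℕ} (w : Fin m → Mark) {i : ℕ} (h : m ≤ i) :
    letterAt w i = Mark.blank := dif_neg (by omega)

lemma eq_of_letterAt {m : ℕ} {w w' : Fin m → Mark}
    (h : ∀ i, letterAt w i = letterAt w' i) : w = w' := by
  funext j
  have h2 := h j
  rw [letterAt_lt w j.isLt, letterAt_lt w' j.isLt] at h2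
  simpa using h2

lemma letterAt_tail {m : ℕ} (w : Fin (m + 1) → Mark) (i : ℕ) :
    letterAt (Fin.tail w) i = letterAt w (i + 1) := by
  unfold letterAt
  rcases lt_or_ge i m with h | h
  · rw [dif_pos h, dif_pos (by omega : i + 1 < m + 1)]
    rfl
  · rw [dif_neg (by omega), dif_neg (by omega)]

lemma letterAt_cons_zero {m : ℕ} (a : Mark) (v : Fin m → Mark) :
    letterAt (Fin.cons a v : Fin (m + 1) → Mark) 0 = a := by
  rw [letterAt_lt _ (Nat.succ_pos m), Fin.mk_zero, Fin.cons_zero]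

lemma letterAt_cons_succ {m : ℕ} (a : Mark) (v : Fin m → Mark) (i : ℕ) :
    letterAt (Fin.cons a v : Fin (m + 1) → Mark) (i + 1) = letterAt v i := by
  rw [← letterAt_tail, Fin.tail_cons]

lemma letterAt_zero_eq {m : ℕ} (w : Fin (m + 1) → Mark) : letterAt w 0 = w 0 := by
  rw [letterAt_lt _ (Nat.succ_pos m), Fin.mk_zero]

lemma cons_letterAt_self {m : ℕ} (w : Fin (m + 1) → Mark) :
    Fin.cons (letterAt w 0) (Fin.tail w) = w := by
  rw [letterAt_zero_eq, Fin.cons_self_tail]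

lemma letterAt_update_zero {m : ℕ} (v : Fin (m + 1) → Mark) (b : Mark) :
    letterAt (Function.update v 0 b) 0 = b := by
  rw [letterAt_zero_eq, Function.update_self]

lemma letterAt_update_succ {m : ℕ} (v : Fin (m + 1) → Mark) (b : Mark) (i : ℕ) :
    letterAt (Function.update v 0 b) (i + 1) = letterAt v (i + 1) := by
  unfold letterAt
  rcases lt_or_ge (i + 1) (m + 1) with h | h
  · rw [dif_pos h, dif_pos h, Function.update_of_ne (by simp [Fin.ext_iff])]
  · rw [dif_neg (by omega), dif_neg (by omega)]

lemma tail_update {m : ℕ} (v : Fin (m + 1) → Mark) (b : Mark) :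
    Fin.tail (Function.update v 0 b) = Fin.tail v := by
  funext i
  exact Function.update_of_ne (Fin.succ_ne_zero i) _ _

lemma cro_eq_sum (n : ℕ) (w : Fin n → Mark) :
    cro n w = ∑ i ∈ Finset.range n, (if letterAt w i = Mark.cross then 1 else 0) := by
  rw [cro, Finset.card_filter]

lemma cro_succ {m : ℕ} (w : Fin (m + 1) → Mark) :
    cro (m + 1) w = cro m (Fin.tail w) + (if letterAt w 0 = Mark.cross then 1 else 0) := by
  rw [cro_eq_sum, cro_eq_sum, Finset.sum_range_succ']
  congr 1
  exact Finset.sum_congr rfl fun i _ => by rw [letterAt_tail]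

lemma cro_cons {m : ℕ} (a : Mark) (v : Fin m → Mark) :
    cro (m + 1) (Fin.cons a v) = cro m v + (if a = Mark.cross then 1 else 0) := by
  rw [cro_succ, Fin.tail_cons, letterAt_cons_zero]

lemma mem_dotSet {n : ℕ} {w : Fin n → Mark} {i : ℕ} :
    i ∈ DotSet n w ↔ letterAt w i = Mark.dot := by
  unfold DotSet
  rw [Finset.mem_filter, Finset.mem_range]
  constructor
  · exact fun h => h.2
  · intro h
    refine ⟨?_, h⟩
    by_contra hn
    rw [letterAt_ge w (by omega)] at h
    exact absurd h (by simp)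

lemma subset_dotSet_iff {T : Finset ℕ} {n : ℕ} {w : Fin n → Mark} :
    T ⊆ DotSet n w ↔ ∀ s ∈ T, letterAt w s = Mark.dot := by
  constructor
  · intro h s hs
    exact mem_dotSet.mp (h hs)
  · intro h s hs
    exact mem_dotSet.mpr (h s hs)

lemma card_bound {T : Finset ℕ} {a b : ℕ} (ha : 1 ≤ a) (hT1 : T ⊆ Finset.Icc a b)
    (hT2 : NoTwoConsec T) : 2 * T.card ≤ b + 2 - a := by
  have hdisj : Disjoint T (T.image (· + 1)) := by
    rw [Finset.disjoint_right]
    intro x hx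
    simp only [Finset.mem_image] at hx
    obtain ⟨y, hy, rfl⟩ := hx
    exact hT2 y hy
  have hsub : T ∪ T.image (· + 1) ⊆ Finset.Icc a (b + 1) := by
    intro x hx
    rcases Finset.mem_union.mp hx with h | h
    · have := hT1 h
      rw [Finset.mem_Icc] at this ⊢
      omega
    · simp only [Finset.mem_image] at h
      obtain ⟨y, hy, rfl⟩ := h
      have := hT1 hy
      rw [Finset.mem_Icc] at this ⊢
      omega
  have hcard := Finset.card_le_card hsub
  rw [Finset.card_union_of_disjoint hdisj,
    Finset.card_image_of_injective _ (add_left_injective 1), Nat.card_Icc] at hcard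
  omega

lemma card_image_sub {T : Finset ℕ} {k : ℕ} (h : ∀ s ∈ T, k ≤ s) :
    (T.image (· - k)).card = T.card :=
  Finset.card_image_of_injOn fun a ha b hb hab => by
    have h1 := h a ha
    have h2 := h b hb
    have hab' : a - k = b - k := hab
    omega

lemma noTwoConsec_image_sub {T : Finset ℕ} {k : ℕ} (h : ∀ s ∈ T, k ≤ s)
    (hT : NoTwoConsec T) : NoTwoConsec (T.image (· - k)) := by
  intro i hi hi1
  simp only [Finset.mem_image] at hi hi1
  obtain ⟨a, ha, rfl⟩ := hi
  obtain ⟨b, hb, hba⟩ := hi1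
  have h1 := h a ha
  have h2 := h b hb
  have : b = a + 1 := by omega
  exact hT a ha (this ▸ hb)

end WtAux

namespace WtAux

lemma isWt_iff (n : ℕ) (w : Fin n → Mark) :
    IsWt n w ↔
      ((∀ i < n, letterAt w i = Mark.dot → 1 ≤ i ∧ letterAt w (i - 1) = Mark.cross) ∧
       (∀ j < n, j ≤ n - 2 → letterAt w j = Mark.cross →
          letterAt w (j + 1) = Mark.cross ∨ letterAt w (j + 1) = Mark.dot)) := by
  constructor
  · rintro ⟨h1, h2⟩
    exact ⟨fun i _ => h1 i, fun j _ => h2 j⟩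
  · rintro ⟨h1, h2⟩
    constructor
    · intro i hi
      rcases lt_or_ge i n with h | h
      · exact h1 i h hi
      · rw [letterAt_ge w h] at hi
        exact absurd hi (by simp)
    · intro j hj hc
      rcases lt_or_ge j n with h | h
      · exact h2 j h hj hc
      · rw [letterAt_ge w h] at hc
        exact absurd hc (by simp)

def decIsWt (n : ℕ) (w : Fin n → Mark) : Decidable (IsWt n w) :=
  decidable_of_iff _ (isWt_iff n w).symm

def decWtPred (n : ℕ) (T : Finset ℕ) :
    DecidablePred (fun w : Fin n → Mark => IsWt n w ∧ T ⊆ DotSet n w) :=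
  fun w => @instDecidableAnd _ _ (decIsWt n w) inferInstance

lemma filter_inst {α : Type*} {p : α → Prop} (h1 h2 : DecidablePred p) (s : Finset α) :
    @Finset.filter α p h1 s = @Finset.filter α p h2 s := by
  rw [Subsingleton.elim h1 h2]

lemma baseSet2_empty :
    @Finset.filter _ (fun w : Fin 2 → Mark => IsWt 2 w ∧ (∅ : Finset ℕ) ⊆ DotSet 2 w)
      (decWtPred 2 ∅) Finset.univ =
    {![Mark.blank, Mark.blank], ![Mark.blank, Mark.cross],
      ![Mark.cross, Mark.cross], ![Mark.cross, Mark.dot]} := by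
  decide

lemma baseSet2_one :
    @Finset.filter _ (fun w : Fin 2 → Mark => IsWt 2 w ∧ ({1} : Finset ℕ) ⊆ DotSet 2 w)
      (decWtPred 2 {1}) Finset.univ = {![Mark.cross, Mark.dot]} := by
  decide

lemma baseSet3_one :
    @Finset.filter _ (fun w : Fin 3 → Mark => IsWt 3 w ∧ ({1} : Finset ℕ) ⊆ DotSet 3 w)
      (decWtPred 3 {1}) Finset.univ =
    {![Mark.cross, Mark.dot, Mark.blank], ![Mark.cross, Mark.dot, Mark.cross]} := by
  decide

end WtAux

namespace WtAux

variable {m : ℕ}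

lemma isWt_zero_ne_dot {n : ℕ} {w : Fin n → Mark} (hw : IsWt n w) :
    letterAt w 0 ≠ Mark.dot := fun h => by have := (hw.1 0 h).1; omega

/-! ### The blank-prepending correspondence -/

lemma isWt_tail {w : Fin (m + 1 + 1 + 1) → Mark} (hw : IsWt (m + 1 + 1 + 1) w)
    (h0 : letterAt w 0 = Mark.blank) : IsWt (m + 1 + 1) (Fin.tail w) := by
  constructor
  · intro i hi
    rw [letterAt_tail] at hi
    have h2 := (hw.1 (i + 1) hi).2
    simp only [Nat.add_sub_cancel] at h2
    rcases Nat.eq_zero_or_pos i with rfl | hpos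
    · rw [h0] at h2
      exact absurd h2 (by decide)
    · refine ⟨hpos, ?_⟩
      rw [letterAt_tail, show i - 1 + 1 = i from by omega]
      exact h2
  · intro j hj hc
    rw [letterAt_tail] at hc
    have h2 := hw.2 (j + 1) (by omega) hc
    rw [letterAt_tail]
    exact h2

lemma isWt_consBlank {v : Fin (m + 1 + 1) → Mark} (hv : IsWt (m + 1 + 1) v) :
    IsWt (m + 1 + 1 + 1) (Fin.cons Mark.blank v) := by
  constructor
  · intro i hi
    rcases i with _ | i
    · rw [letterAt_cons_zero] at hi
      exact absurd hi (by decide)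
    · rw [letterAt_cons_succ] at hi
      obtain ⟨h1, h2⟩ := hv.1 i hi
      refine ⟨by omega, ?_⟩
      rw [Nat.add_sub_cancel, show i = i - 1 + 1 from by omega, letterAt_cons_succ]
      exact h2
  · intro j hj hc
    rcases j with _ | j
    · rw [letterAt_cons_zero] at hc
      exact absurd hc (by decide)
    · rw [letterAt_cons_succ] at hc
      have h2 := hv.2 j (by omega) hc
      rw [letterAt_cons_succ]
      exact h2

lemma cro_consBlank (v : Fin (m + 1 + 1) → Mark) :
    cro (m + 1 + 1 + 1) (Fin.cons Mark.blank v) = cro (m + 1 + 1) v := by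
  rw [cro_cons, if_neg (by decide), Nat.add_zero]

lemma cro_blank {w : Fin (m + 1 + 1 + 1) → Mark} (h0 : letterAt w 0 = Mark.blank) :
    cro (m + 1 + 1 + 1) w = cro (m + 1 + 1) (Fin.tail w) := by
  rw [cro_succ, h0, if_neg (by decide), Nat.add_zero]

/-! ### The cross-case correspondence -/

def fwdC (w : Fin (m + 1 + 1 + 1) → Mark) : Fin (m + 1 + 1) → Mark :=
  Function.update (Fin.tail w) 0
    (if letterAt w (0 + 1) = Mark.dot then Mark.blank else Mark.cross)

def bwdC (v : Fin (m + 1 + 1) → Mark) : Fin (m + 1 + 1 + 1) → Mark :=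
  Fin.cons Mark.cross
    (if letterAt v 0 = Mark.blank then Function.update v 0 Mark.dot else v)

lemma letterAt_fwdC_zero (w : Fin (m + 1 + 1 + 1) → Mark) :
    letterAt (fwdC w) 0 =
      (if letterAt w (0 + 1) = Mark.dot then Mark.blank else Mark.cross) :=
  letterAt_update_zero _ _

lemma letterAt_fwdC_succ (w : Fin (m + 1 + 1 + 1) → Mark) (i : ℕ) :
    letterAt (fwdC w) (i + 1) = letterAt w (i + 1 + 1) := by
  unfold fwdC
  rw [letterAt_update_succ, letterAt_tail]

lemma letterAt_bwdC_zero (v : Fin (m + 1 + 1) → Mark) :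
    letterAt (bwdC v) 0 = Mark.cross := letterAt_cons_zero _ _

lemma letterAt_bwdC_one (v : Fin (m + 1 + 1) → Mark) :
    letterAt (bwdC v) (0 + 1) =
      (if letterAt v 0 = Mark.blank then Mark.dot else letterAt v 0) := by
  unfold bwdC
  rw [letterAt_cons_succ]
  split_ifs with h
  · rw [letterAt_update_zero]
  · rfl

lemma letterAt_bwdC_succsucc (v : Fin (m + 1 + 1) → Mark) (i : ℕ) :
    letterAt (bwdC v) (i + 1 + 1) = letterAt v (i + 1) := by
  unfold bwdC
  rw [letterAt_cons_succ]
  split_ifs with h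
  · rw [letterAt_update_succ]
  · rfl

lemma isWt_fwdC {w : Fin (m + 1 + 1 + 1) → Mark} (hw : IsWt (m + 1 + 1 + 1) w)
    (h0 : letterAt w 0 = Mark.cross) : IsWt (m + 1 + 1) (fwdC w) := by
  have h1 := hw.2 0 (by omega) h0
  constructor
  · intro i hi
    rcases i with _ | _ | i
    · rw [letterAt_fwdC_zero] at hi
      split_ifs at hi
    · rw [letterAt_fwdC_succ] at hi
      have h2 := (hw.1 (0 + 1 + 1) hi).2
      rw [show (0:ℕ) + 1 + 1 - 1 = 0 + 1 from rfl] at h2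
      refine ⟨by omega, ?_⟩
      rw [show (0:ℕ) + 1 - 1 = 0 from rfl, letterAt_fwdC_zero,
        if_neg (by rw [h2]; decide)]
    · rw [letterAt_fwdC_succ] at hi
      have h2 := (hw.1 (i + 1 + 1 + 1) hi).2
      rw [show i + 1 + 1 + 1 - 1 = i + 1 + 1 from by omega] at h2
      refine ⟨by omega, ?_⟩
      rw [show i + 1 + 1 - 1 = i + 1 from by omega, letterAt_fwdC_succ]
      exact h2
  · intro j hj hc
    rcases j with _ | j
    · rw [letterAt_fwdC_zero] at hc
      have hw1 : letterAt w (0 + 1) = Mark.cross := by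
        rcases h1 with h | h
        · exact h
        · rw [if_pos h] at hc
          exact absurd hc (by decide)
      have h2 := hw.2 (0 + 1) (by omega) hw1
      rw [letterAt_fwdC_succ]
      exact h2
    · rw [letterAt_fwdC_succ] at hc
      have h2 := hw.2 (j + 1 + 1) (by omega) hc
      rw [letterAt_fwdC_succ]
      exact h2

lemma isWt_bwdC {v : Fin (m + 1 + 1) → Mark} (hv : IsWt (m + 1 + 1) v) :
    IsWt (m + 1 + 1 + 1) (bwdC v) := by
  have hv0 := isWt_zero_ne_dot hv
  constructor
  · intro i hi
    rcases i with _ | _ | i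
    · rw [letterAt_bwdC_zero] at hi
      exact absurd hi (by decide)
    · refine ⟨by omega, ?_⟩
      rw [show (0:ℕ) + 1 - 1 = 0 from rfl, letterAt_bwdC_zero]
    · rw [letterAt_bwdC_succsucc] at hi
      obtain ⟨hge, h2⟩ := hv.1 (i + 1) hi
      simp only [Nat.add_sub_cancel] at h2
      refine ⟨by omega, ?_⟩
      rw [show i + 1 + 1 - 1 = i + 1 from by omega]
      rcases i with _ | i
      · rw [letterAt_bwdC_one, if_neg (by rw [h2]; decide), h2]
      · rw [letterAt_bwdC_succsucc]
        exact h2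
  · intro j hj hc
    rcases j with _ | _ | j
    · rw [letterAt_bwdC_one]
      by_cases hb : letterAt v 0 = Mark.blank
      · rw [if_pos hb]
        right; rfl
      · rw [if_neg hb]
        rcases hx : letterAt v 0 with _ | _ | _
        · exact absurd hx hv0
        · left; rfl
        · exact absurd hx hb
    · rw [letterAt_bwdC_one] at hc
      have hvc : letterAt v 0 = Mark.cross := by
        by_cases hb : letterAt v 0 = Mark.blank
        · rw [if_pos hb] at hc
          exact absurd hc (by decide)
        · rw [if_neg hb] at hc
          exact hc
      have h2 := hv.2 0 (by omega) hvc
      rw [letterAt_bwdC_succsucc]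
      exact h2
    · rw [letterAt_bwdC_succsucc] at hc
      have h2 := hv.2 (j + 1) (by omega) hc
      rw [letterAt_bwdC_succsucc]
      exact h2

lemma bwdC_fwdC {w : Fin (m + 1 + 1 + 1) → Mark} (h0 : letterAt w 0 = Mark.cross)
    (h1 : letterAt w (0 + 1) = Mark.cross ∨ letterAt w (0 + 1) = Mark.dot) :
    bwdC (fwdC w) = w := by
  apply eq_of_letterAt
  intro i
  rcases i with _ | _ | i
  · rw [letterAt_bwdC_zero, h0]
  · rw [letterAt_bwdC_one, letterAt_fwdC_zero]
    rcases h1 with h | h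
    · rw [h]
      simp
    · rw [h]
      simp
  · rw [letterAt_bwdC_succsucc, letterAt_fwdC_succ]

lemma fwdC_bwdC {v : Fin (m + 1 + 1) → Mark} (hv0 : letterAt v 0 ≠ Mark.dot) :
    fwdC (bwdC v) = v := by
  apply eq_of_letterAt
  intro i
  rcases i with _ | i
  · rw [letterAt_fwdC_zero, letterAt_bwdC_one]
    by_cases hb : letterAt v 0 = Mark.blank
    · rw [if_pos hb, if_pos rfl, hb]
    · rw [if_neg hb, if_neg hv0]
      rcases hx : letterAt v 0 with _ | _ | _
      · exact absurd hx hv0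
      · rfl
      · exact absurd hx hb
  · rw [letterAt_fwdC_succ, letterAt_bwdC_succsucc]

lemma cro_update_zero (v : Fin (m + 1) → Mark) (b : Mark) (hb : b ≠ Mark.cross)
    (h0 : letterAt v 0 ≠ Mark.cross) :
    cro (m + 1) (Function.update v 0 b) = cro (m + 1) v := by
  rw [cro_succ, cro_succ v, tail_update, letterAt_update_zero, if_neg hb, if_neg h0]

lemma cro_bwdC (v : Fin (m + 1 + 1) → Mark) :
    cro (m + 1 + 1 + 1) (bwdC v) = cro (m + 1 + 1) v + 1 := by
  unfold bwdC
  rw [cro_cons, if_pos rfl]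
  congr 1
  split_ifs with hb
  · exact cro_update_zero v Mark.dot (by decide) (by rw [hb]; decide)
  · rfl

/-! ### The dot-pair removal correspondence -/

def fwd2 (w : Fin (m + 1 + 1 + 1 + 1) → Mark) : Fin (m + 1 + 1) → Mark :=
  Fin.tail (Fin.tail w)

def bwd2 (v : Fin (m + 1 + 1) → Mark) : Fin (m + 1 + 1 + 1 + 1) → Mark :=
  Fin.cons Mark.cross (Fin.cons Mark.dot v)

lemma letterAt_fwd2 (w : Fin (m + 1 + 1 + 1 + 1) → Mark) (i : ℕ) :
    letterAt (fwd2 w) i = letterAt w (i + 1 + 1) := by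
  unfold fwd2
  rw [letterAt_tail, letterAt_tail]

lemma letterAt_bwd2_zero (v : Fin (m + 1 + 1) → Mark) :
    letterAt (bwd2 v) 0 = Mark.cross := letterAt_cons_zero _ _

lemma letterAt_bwd2_one (v : Fin (m + 1 + 1) → Mark) :
    letterAt (bwd2 v) (0 + 1) = Mark.dot := by
  unfold bwd2
  rw [letterAt_cons_succ, letterAt_cons_zero]

lemma letterAt_bwd2_succsucc (v : Fin (m + 1 + 1) → Mark) (i : ℕ) :
    letterAt (bwd2 v) (i + 1 + 1) = letterAt v i := by
  unfold bwd2
  rw [letterAt_cons_succ, letterAt_cons_succ]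

lemma isWt_fwd2 {w : Fin (m + 1 + 1 + 1 + 1) → Mark} (hw : IsWt (m + 1 + 1 + 1 + 1) w)
    (h1 : letterAt w (0 + 1) = Mark.dot) : IsWt (m + 1 + 1) (fwd2 w) := by
  constructor
  · intro i hi
    rw [letterAt_fwd2] at hi
    have h2 := (hw.1 (i + 1 + 1) hi).2
    rw [show i + 1 + 1 - 1 = i + 1 from by omega] at h2
    rcases i with _ | i
    · exact absurd (h2.symm.trans h1) (by decide)
    · refine ⟨by omega, ?_⟩
      rw [Nat.add_sub_cancel, letterAt_fwd2]
      exact h2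
  · intro j hj hc
    rw [letterAt_fwd2] at hc
    have h2 := hw.2 (j + 1 + 1) (by omega) hc
    rw [letterAt_fwd2]
    exact h2

lemma isWt_bwd2 {v : Fin (m + 1 + 1) → Mark} (hv : IsWt (m + 1 + 1) v) :
    IsWt (m + 1 + 1 + 1 + 1) (bwd2 v) := by
  constructor
  · intro i hi
    rcases i with _ | _ | i
    · rw [letterAt_bwd2_zero] at hi
      exact absurd hi (by decide)
    · refine ⟨by omega, ?_⟩
      rw [show (0:ℕ) + 1 - 1 = 0 from rfl, letterAt_bwd2_zero]
    · rw [letterAt_bwd2_succsucc] at hi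
      obtain ⟨hge, h2⟩ := hv.1 i hi
      refine ⟨by omega, ?_⟩
      rw [show i + 1 + 1 - 1 = (i - 1) + 1 + 1 from by omega, letterAt_bwd2_succsucc]
      exact h2
  · intro j hj hc
    rcases j with _ | _ | j
    · right
      rw [letterAt_bwd2_one]
    · rw [letterAt_bwd2_one] at hc
      exact absurd hc (by decide)
    · rw [letterAt_bwd2_succsucc] at hc
      have h2 := hv.2 j (by omega) hc
      rw [letterAt_bwd2_succsucc]
      exact h2

lemma bwd2_fwd2 {w : Fin (m + 1 + 1 + 1 + 1) → Mark} (h0 : letterAt w 0 = Mark.cross)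
    (h1 : letterAt w (0 + 1) = Mark.dot) : bwd2 (fwd2 w) = w := by
  apply eq_of_letterAt
  intro i
  rcases i with _ | _ | i
  · rw [letterAt_bwd2_zero, h0]
  · rw [letterAt_bwd2_one, h1]
  · rw [letterAt_bwd2_succsucc, letterAt_fwd2]

lemma fwd2_bwd2 (v : Fin (m + 1 + 1) → Mark) : fwd2 (bwd2 v) = v :=
  eq_of_letterAt fun i => by rw [letterAt_fwd2, letterAt_bwd2_succsucc]

lemma cro_bwd2 (v : Fin (m + 1 + 1) → Mark) :
    cro (m + 1 + 1 + 1 + 1) (bwd2 v) = cro (m + 1 + 1) v + 1 := by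
  unfold bwd2
  rw [cro_cons, cro_cons, if_pos rfl, if_neg (by decide)]

end WtAux

namespace WtAux

open Polynomial Finset

open scoped Classical in
lemma step1 (m : ℕ) (T : Finset ℕ) (hT1 : T ⊆ Finset.Icc 2 (m + 1 + 1)) :
    ∑ w ∈ Finset.univ.filter
        (fun w : Fin (m + 1 + 1 + 1) → Mark =>
          IsWt (m + 1 + 1 + 1) w ∧ T ⊆ DotSet (m + 1 + 1 + 1) w),
      (X : Polynomial ℤ) ^ cro (m + 1 + 1 + 1) w
    = (1 + X) * ∑ v ∈ Finset.univ.filter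
        (fun v : Fin (m + 1 + 1) → Mark =>
          IsWt (m + 1 + 1) v ∧ T.image (· - 1) ⊆ DotSet (m + 1 + 1) v),
      (X : Polynomial ℤ) ^ cro (m + 1 + 1) v := by
  have hTs : ∀ s ∈ T, 2 ≤ s ∧ s ≤ m + 1 + 1 := fun s hs => Finset.mem_Icc.mp (hT1 hs)
  rw [← Finset.sum_filter_add_sum_filter_not
      (Finset.univ.filter fun w : Fin (m + 1 + 1 + 1) → Mark =>
        IsWt (m + 1 + 1 + 1) w ∧ T ⊆ DotSet (m + 1 + 1 + 1) w)
      (fun w => letterAt w 0 = Mark.blank)]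
  have hblank :
      ∑ w ∈ (Finset.univ.filter fun w : Fin (m + 1 + 1 + 1) → Mark =>
          IsWt (m + 1 + 1 + 1) w ∧ T ⊆ DotSet (m + 1 + 1 + 1) w).filter
        (fun w => letterAt w 0 = Mark.blank),
        (X : Polynomial ℤ) ^ cro (m + 1 + 1 + 1) w
      = ∑ v ∈ Finset.univ.filter
          (fun v : Fin (m + 1 + 1) → Mark =>
            IsWt (m + 1 + 1) v ∧ T.image (· - 1) ⊆ DotSet (m + 1 + 1) v),
        (X : Polynomial ℤ) ^ cro (m + 1 + 1) v := by
    refine Finset.sum_bij' (fun w _ => Fin.tail w) (fun v _ => Fin.cons Mark.blank v)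
      ?_ ?_ ?_ ?_ ?_
    · intro w hw
      simp only [Finset.mem_filter, Finset.mem_univ, true_and] at hw ⊢
      obtain ⟨⟨hWt, hDot⟩, h0⟩ := hw
      refine ⟨isWt_tail hWt h0, ?_⟩
      rw [subset_dotSet_iff]
      intro s' hs'
      simp only [Finset.mem_image] at hs'
      obtain ⟨s, hs, rfl⟩ := hs'
      have h2s := (hTs s hs).1
      rw [letterAt_tail, show s - 1 + 1 = s from by omega]
      exact subset_dotSet_iff.mp hDot s hs
    · intro v hv
      simp only [Finset.mem_filter, Finset.mem_univ, true_and] at hv ⊢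
      obtain ⟨hWt, hDot⟩ := hv
      refine ⟨⟨isWt_consBlank hWt, ?_⟩, letterAt_cons_zero _ _⟩
      rw [subset_dotSet_iff]
      intro s hs
      have h2s := (hTs s hs).1
      have hmem : s - 1 ∈ T.image (· - 1) := Finset.mem_image_of_mem _ hs
      have hd := subset_dotSet_iff.mp hDot _ hmem
      rw [show s = (s - 1) + 1 from by omega, letterAt_cons_succ]
      exact hd
    · intro w hw
      simp only [Finset.mem_filter, Finset.mem_univ, true_and] at hw
      rw [← hw.2, cons_letterAt_self]
    · intro v _
      exact Fin.tail_cons _ _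
    · intro w hw
      simp only [Finset.mem_filter, Finset.mem_univ, true_and] at hw
      rw [cro_blank hw.2]
  have hcross :
      ∑ w ∈ (Finset.univ.filter fun w : Fin (m + 1 + 1 + 1) → Mark =>
          IsWt (m + 1 + 1 + 1) w ∧ T ⊆ DotSet (m + 1 + 1 + 1) w).filter
        (fun w => ¬letterAt w 0 = Mark.blank),
        (X : Polynomial ℤ) ^ cro (m + 1 + 1 + 1) w
      = ∑ v ∈ Finset.univ.filter
          (fun v : Fin (m + 1 + 1) → Mark =>
            IsWt (m + 1 + 1) v ∧ T.image (· - 1) ⊆ DotSet (m + 1 + 1) v),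
        X * (X : Polynomial ℤ) ^ cro (m + 1 + 1) v := by
    have hcr : ∀ w : Fin (m + 1 + 1 + 1) → Mark, IsWt (m + 1 + 1 + 1) w →
        ¬letterAt w 0 = Mark.blank → letterAt w 0 = Mark.cross := by
      intro w hWt h0
      rcases hx : letterAt w 0 with _ | _ | _
      · exact absurd hx (isWt_zero_ne_dot hWt)
      · rfl
      · exact absurd hx h0
    refine Finset.sum_bij' (fun w _ => fwdC w) (fun v _ => bwdC v) ?_ ?_ ?_ ?_ ?_
    · intro w hw
      simp only [Finset.mem_filter, Finset.mem_univ, true_and] at hw ⊢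
      obtain ⟨⟨hWt, hDot⟩, h0⟩ := hw
      have h0c := hcr w hWt h0
      refine ⟨isWt_fwdC hWt h0c, ?_⟩
      rw [subset_dotSet_iff]
      intro s' hs'
      simp only [Finset.mem_image] at hs'
      obtain ⟨s, hs, rfl⟩ := hs'
      have h2s := (hTs s hs).1
      rw [show s - 1 = (s - 1 - 1) + 1 from by omega, letterAt_fwdC_succ,
        show s - 1 - 1 + 1 + 1 = s from by omega]
      exact subset_dotSet_iff.mp hDot s hs
    · intro v hv
      simp only [Finset.mem_filter, Finset.mem_univ, true_and] at hv ⊢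
      obtain ⟨hWt, hDot⟩ := hv
      refine ⟨⟨isWt_bwdC hWt, ?_⟩, by rw [letterAt_bwdC_zero]; decide⟩
      rw [subset_dotSet_iff]
      intro s hs
      have h2s := (hTs s hs).1
      have hmem : s - 1 ∈ T.image (· - 1) := Finset.mem_image_of_mem _ hs
      have hd := subset_dotSet_iff.mp hDot _ hmem
      rw [show s = (s - 1 - 1) + 1 + 1 from by omega, letterAt_bwdC_succsucc,
        show s - 1 - 1 + 1 = s - 1 from by omega]
      exact hd
    · intro w hw
      simp only [Finset.mem_filter, Finset.mem_univ, true_and] at hw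
      obtain ⟨⟨hWt, _⟩, h0⟩ := hw
      have h0c := hcr w hWt h0
      exact bwdC_fwdC h0c (hWt.2 0 (by omega) h0c)
    · intro v hv
      simp only [Finset.mem_filter, Finset.mem_univ, true_and] at hv
      exact fwdC_bwdC (isWt_zero_ne_dot hv.1)
    · intro w hw
      simp only [Finset.mem_filter, Finset.mem_univ, true_and] at hw
      obtain ⟨⟨hWt, _⟩, h0⟩ := hw
      have h0c := hcr w hWt h0
      have hli := bwdC_fwdC h0c (hWt.2 0 (by omega) h0c)
      have hcro : cro (m + 1 + 1 + 1) w = cro (m + 1 + 1) (fwdC w) + 1 := by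
        conv_lhs => rw [← hli]
        rw [cro_bwdC]
      rw [hcro, pow_succ]
      ring
  rw [hblank, hcross, ← Finset.sum_add_distrib, Finset.mul_sum]
  exact Finset.sum_congr rfl fun v _ => by ring

open scoped Classical in
lemma step2 (m : ℕ) (T : Finset ℕ) (h1T : 1 ∈ T)
    (hT1 : T ⊆ Finset.Icc 1 (m + 1 + 1 + 1)) (hT2 : NoTwoConsec T) :
    ∑ w ∈ Finset.univ.filter
        (fun w : Fin (m + 1 + 1 + 1 + 1) → Mark =>
          IsWt (m + 1 + 1 + 1 + 1) w ∧ T ⊆ DotSet (m + 1 + 1 + 1 + 1) w),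
      (X : Polynomial ℤ) ^ cro (m + 1 + 1 + 1 + 1) w
    = X * ∑ v ∈ Finset.univ.filter
        (fun v : Fin (m + 1 + 1) → Mark =>
          IsWt (m + 1 + 1) v ∧ (T.erase 1).image (· - 2) ⊆ DotSet (m + 1 + 1) v),
      (X : Polynomial ℤ) ^ cro (m + 1 + 1) v := by
  have h2T : 2 ∉ T := hT2 1 h1T
  have hTs : ∀ s ∈ T, 1 ≤ s ∧ s ≤ m + 1 + 1 + 1 := fun s hs => Finset.mem_Icc.mp (hT1 hs)
  have hkey : ∀ w : Fin (m + 1 + 1 + 1 + 1) → Mark,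
      IsWt (m + 1 + 1 + 1 + 1) w → T ⊆ DotSet (m + 1 + 1 + 1 + 1) w →
      letterAt w 0 = Mark.cross ∧ letterAt w (0 + 1) = Mark.dot := by
    intro w hWt hDot
    have h1 : letterAt w (0 + 1) = Mark.dot := by
      have := subset_dotSet_iff.mp hDot 1 h1T
      simpa using this
    have h0 := (hWt.1 (0 + 1) h1).2
    rw [show (0:ℕ) + 1 - 1 = 0 from rfl] at h0
    exact ⟨h0, h1⟩
  rw [Finset.mul_sum]
  refine Finset.sum_bij' (fun w _ => fwd2 w) (fun v _ => bwd2 v) ?_ ?_ ?_ ?_ ?_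
  · intro w hw
    simp only [Finset.mem_filter, Finset.mem_univ, true_and] at hw ⊢
    obtain ⟨hWt, hDot⟩ := hw
    obtain ⟨h0, h1⟩ := hkey w hWt hDot
    refine ⟨isWt_fwd2 hWt h1, ?_⟩
    rw [subset_dotSet_iff]
    intro s' hs'
    simp only [Finset.mem_image, Finset.mem_erase] at hs'
    obtain ⟨s, ⟨hs1, hs⟩, rfl⟩ := hs'
    have hle := hTs s hs
    have hs3 : 3 ≤ s := by
      rcases Nat.lt_or_ge s 3 with h | h
      · interval_cases s
        · omega
        · exact absurd rfl hs1
        · exact absurd hs h2T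
      · exact h
    rw [letterAt_fwd2, show s - 2 + 1 + 1 = s from by omega]
    exact subset_dotSet_iff.mp hDot s hs
  · intro v hv
    simp only [Finset.mem_filter, Finset.mem_univ, true_and] at hv ⊢
    obtain ⟨hWt, hDot⟩ := hv
    refine ⟨isWt_bwd2 hWt, ?_⟩
    rw [subset_dotSet_iff]
    intro s hs
    by_cases hs1 : s = 1
    · subst hs1
      have : letterAt (bwd2 v) (0 + 1) = Mark.dot := letterAt_bwd2_one v
      simpa using this
    · have hle := hTs s hs
      have hs3 : 3 ≤ s := by
        rcases Nat.lt_or_ge s 3 with h | h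
        · interval_cases s
          · omega
          · exact absurd rfl hs1
          · exact absurd hs h2T
        · exact h
      have hmem : s - 2 ∈ (T.erase 1).image (· - 2) :=
        Finset.mem_image_of_mem _ (Finset.mem_erase.mpr ⟨hs1, hs⟩)
      have hd := subset_dotSet_iff.mp hDot _ hmem
      rw [show s = (s - 2) + 1 + 1 from by omega, letterAt_bwd2_succsucc]
      exact hd
  · intro w hw
    simp only [Finset.mem_filter, Finset.mem_univ, true_and] at hw
    obtain ⟨h0, h1⟩ := hkey w hw.1 hw.2
    exact bwd2_fwd2 h0 h1
  · intro v _
    exact fwd2_bwd2 v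
  · intro w hw
    simp only [Finset.mem_filter, Finset.mem_univ, true_and] at hw
    obtain ⟨h0, h1⟩ := hkey w hw.1 hw.2
    have hli := bwd2_fwd2 h0 h1
    have hcro : cro (m + 1 + 1 + 1 + 1) w = cro (m + 1 + 1) (fwd2 w) + 1 := by
      conv_lhs => rw [← hli]
      rw [cro_bwd2]
    rw [hcro, pow_succ]
    ring

end WtAux

open scoped Classical in
/-- For `n ≥ 2` and `T ⊆ [1, n-1]` with no two consecutive integers:
`∑_{w ∈ W̃_n, Dot(w) ⊇ T} t^{cro(w)} = t^{|T|} (1+t)^{n-2|T|}`. -/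
theorem Wt_genfun_superset (n : ℕ) (hn : 2 ≤ n) (T : Finset ℕ)
    (hT1 : T ⊆ Finset.Icc 1 (n - 1)) (hT2 : NoTwoConsec T) :
    ∑ w ∈ Finset.univ.filter (fun w : Fin n → Mark => IsWt n w ∧ T ⊆ DotSet n w),
      (X : Polynomial ℤ) ^ cro n w =
      X ^ T.card * (1 + X) ^ (n - 2 * T.card) := by
  suffices H : ∀ N : ℕ, 2 ≤ N → ∀ S : Finset ℕ, S ⊆ Finset.Icc 1 (N - 1) →
      NoTwoConsec S →
      ∑ w ∈ Finset.univ.filter (fun w : Fin N → Mark => IsWt N w ∧ S ⊆ DotSet N w),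
        (X : Polynomial ℤ) ^ cro N w =
        X ^ S.card * (1 + X) ^ (N - 2 * S.card) by
    exact H n hn T hT1 hT2
  intro N
  induction N using Nat.strong_induction_on with
  | _ N ih =>
  intro hN S hS1 hS2
  rcases eq_or_ne N 2 with rfl | hN2
  · -- base case N = 2
    have hsub : S ⊆ {1} := by
      intro s hs
      have := hS1 hs
      simp only [Finset.mem_Icc, Finset.mem_singleton] at this ⊢
      omega
    rcases Finset.subset_singleton_iff.mp hsub with rfl | rfl
    · rw [WtAux.filter_inst _ (WtAux.decWtPred 2 ∅), WtAux.baseSet2_empty,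
        Finset.sum_insert (by decide), Finset.sum_insert (by decide),
        Finset.sum_insert (by decide), Finset.sum_singleton,
        show cro 2 ![Mark.blank, Mark.blank] = 0 from by decide,
        show cro 2 ![Mark.blank, Mark.cross] = 1 from by decide,
        show cro 2 ![Mark.cross, Mark.cross] = 2 from by decide,
        show cro 2 ![Mark.cross, Mark.dot] = 1 from by decide]
      simp only [Finset.card_empty, Nat.mul_zero, Nat.sub_zero, pow_zero, one_mul]
      ring
    · rw [WtAux.filter_inst _ (WtAux.decWtPred 2 {1}), WtAux.baseSet2_one,
        Finset.sum_singleton,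
        show cro 2 ![Mark.cross, Mark.dot] = 1 from by decide]
      simp only [Finset.card_singleton]
      norm_num
  · by_cases h1S : 1 ∈ S
    · rcases eq_or_ne N 3 with rfl | hN3
      · -- base case N = 3, S = {1}
        have hSeq : S = {1} := by
          apply Finset.Subset.antisymm
          · intro s hs
            have hmem := hS1 hs
            rw [Finset.mem_Icc] at hmem
            have h2 : s ≠ 2 := by
              intro h
              subst h
              exact (hS2 1 h1S) hs
            rw [Finset.mem_singleton]
            omega
          · intro s hs
            rw [Finset.mem_singleton] at hs
            exact hs ▸ h1S
        subst hSeq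
        rw [WtAux.filter_inst _ (WtAux.decWtPred 3 {1}), WtAux.baseSet3_one,
          Finset.sum_insert (by decide), Finset.sum_singleton,
          show cro 3 ![Mark.cross, Mark.dot, Mark.blank] = 1 from by decide,
          show cro 3 ![Mark.cross, Mark.dot, Mark.cross] = 2 from by decide]
        simp only [Finset.card_singleton]
        norm_num
        ring
      · -- inductive step, 1 ∈ S, N ≥ 4
        obtain ⟨m, rfl⟩ : ∃ m, N = m + 1 + 1 + 1 + 1 := ⟨N - 4, by omega⟩
        have hS1' : S ⊆ Finset.Icc 1 (m + 1 + 1 + 1) := by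
          intro s hs
          have := hS1 hs
          rw [Finset.mem_Icc] at this ⊢
          omega
        rw [WtAux.step2 m S h1S hS1' hS2]
        have hmem : ∀ s ∈ S.erase 1, 3 ≤ s := by
          intro s hs
          rw [Finset.mem_erase] at hs
          have := hS1' hs.2
          rw [Finset.mem_Icc] at this
          have h2 : s ≠ 2 := by
            intro h
            subst h
            exact (hS2 1 h1S) hs.2
          have h1 := hs.1
          omega
        have hsub' : (S.erase 1).image (· - 2) ⊆ Finset.Icc 1 (m + 1 + 1 - 1) := by
          intro x hx
          rw [Finset.mem_image] at hx
          obtain ⟨s, hs, rfl⟩ := hx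
          have h3 := hmem s hs
          have := hS1' (Finset.mem_erase.mp hs).2
          rw [Finset.mem_Icc] at this ⊢
          omega
        have hcons' : NoTwoConsec ((S.erase 1).image (· - 2)) := by
          refine WtAux.noTwoConsec_image_sub (fun s hs => by have := hmem s hs; omega) ?_
          intro i hi hi1
          rw [Finset.mem_erase] at hi hi1
          exact hS2 i hi.2 hi1.2
        have hcard' : ((S.erase 1).image (· - 2)).card = S.card - 1 := by
          rw [WtAux.card_image_sub (fun s hs => by have := hmem s hs; omega),
            Finset.card_erase_of_mem h1S]
        rw [ih (m + 1 + 1) (by omega) (by omega) _ hsub' hcons', hcard']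
        have hb := WtAux.card_bound (le_refl 1) hS1' hS2
        have hpos : 1 ≤ S.card := Finset.card_pos.mpr ⟨1, h1S⟩
        obtain ⟨c, hc⟩ : ∃ c, S.card = c + 1 := ⟨S.card - 1, by omega⟩
        rw [hc, show c + 1 - 1 = c from by omega,
          show m + 1 + 1 - 2 * c = m + 1 + 1 + 1 + 1 - 2 * (c + 1) from by omega]
        ring
    · -- inductive step, 1 ∉ S, N ≥ 3
      obtain ⟨m, rfl⟩ : ∃ m, N = m + 1 + 1 + 1 := ⟨N - 3, by omega⟩
      have hS1' : S ⊆ Finset.Icc 2 (m + 1 + 1) := by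
        intro s hs
        have h1 := hS1 hs
        rw [Finset.mem_Icc] at h1 ⊢
        have h2 : s ≠ 1 := fun h => h1S (h ▸ hs)
        omega
      rw [WtAux.step1 m S hS1']
      have hge2 : ∀ s ∈ S, 2 ≤ s := fun s hs => (Finset.mem_Icc.mp (hS1' hs)).1
      have hsub' : S.image (· - 1) ⊆ Finset.Icc 1 (m + 1 + 1 - 1) := by
        intro x hx
        rw [Finset.mem_image] at hx
        obtain ⟨s, hs, rfl⟩ := hx
        have h2 := hge2 s hs
        have := Finset.mem_Icc.mp (hS1' hs)
        rw [Finset.mem_Icc]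
        omega
      have hcons' : NoTwoConsec (S.image (· - 1)) :=
        WtAux.noTwoConsec_image_sub (fun s hs => by have := hge2 s hs; omega) hS2
      have hcard' : (S.image (· - 1)).card = S.card :=
        WtAux.card_image_sub (fun s hs => by have := hge2 s hs; omega)
      rw [ih (m + 1 + 1) (by omega) (by omega) _ hsub' hcons', hcard']
      have hb : 2 * S.card ≤ m + 1 + 1 := by
        have := WtAux.card_bound (by omega) hS1' hS2
        omega
      rw [show m + 1 + 1 + 1 - 2 * S.card = (m + 1 + 1 - 2 * S.card) + 1 from by omega]
      ring
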